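/- Let C be an F_q-linear code of length n, χ a nontrivial additive character of F_q, and w₁, …, w_ℓ ∈ F_q^n fixed reference vectors. Then the Jacobi polynomial of the dual code satisfies the MacWilliams-type identity: J_{C⊥, w₁,…,w_ℓ}({x_a}_{a ∈ F₂^{ℓ+1}}) = (1/|C|) · J_{C, w₁,…,w_ℓ} evaluated at the substitution sending, for each a = (a₁,…,a_{ℓ+1}) ∈ F_q^{ℓ+1}, the variable indexed by (φ(a₁), φ(a₂), …, φ(a_{ℓ+1})) to ∑_{b ∈ F_q} χ(a₁ b) · x_{(φ(b), φ(a₂), …, φ(a_{ℓ+1}))}. -/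
import Mathlib


open scoped Classical

/-- `φ(x) = 1` if `x ≠ 0` and `0` otherwise, valued in `Fin 2`. -/
noncomputable def phi {F : Type*} [Zero F] (x : F) : Fin 2 := if x = 0 then 0 else 1

/-- `N_a(u, w₁, …, w_ℓ)`: the number of coordinates `i` such that
`(φ(uᵢ), φ(w₁ᵢ), …, φ(w_ℓᵢ)) = a`. -/
noncomputable def Njac {F : Type*} [Zero F] {n ℓ : ℕ} (u : Fin n → F)
    (w : Fin ℓ → Fin n → F) (a : Fin (ℓ + 1) → Fin 2) : ℕ :=
  (Finset.univ.filter fun i : Fin n =>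
    (Fin.cons (phi (u i)) (fun j => phi (w j i)) : Fin (ℓ + 1) → Fin 2) = a).card

/-- The Jacobi polynomial of a linear code `C` with respect to `ℓ` reference vectors,
a polynomial in `2^{ℓ+1}` variables indexed by `F₂^{ℓ+1}`. -/
noncomputable def jacPoly {F : Type*} [Field F] [Fintype F] {n ℓ : ℕ}
    (C : Submodule F (Fin n → F)) (w : Fin ℓ → Fin n → F) :
    MvPolynomial (Fin (ℓ + 1) → Fin 2) ℂ :=
  ∑ u : C, ∏ a : Fin (ℓ + 1) → Fin 2, MvPolynomial.X a ^ Njac (u : Fin n → F) w a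

/- ## Auxiliary lemmas -/

lemma addChar_map_sum {A M : Type*} [AddCommMonoid A] [CommMonoid M] (χ : AddChar A M)
    {ι : Type*} (s : Finset ι) (f : ι → A) : χ (∑ i ∈ s, f i) = ∏ i ∈ s, χ (f i) := by
  induction s using Finset.cons_induction with
  | empty => simp
  | cons a s ha ih => rw [Finset.sum_cons, Finset.prod_cons, χ.map_add_eq_mul, ih]

/-- Regrouping a product over coordinates according to the pattern. -/
lemma prod_pow_Njac {F : Type*} [Zero F] {n ℓ : ℕ} (u : Fin n → F) (w : Fin ℓ → Fin n → F)
    {R : Type*} [CommMonoid R] (M : (Fin (ℓ + 1) → Fin 2) → R) :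
    ∏ a : Fin (ℓ + 1) → Fin 2, M a ^ Njac u w a
      = ∏ i : Fin n, M (Fin.cons (phi (u i)) (fun j => phi (w j i))) := by
  rw [← Finset.prod_fiberwise' Finset.univ
    (fun i : Fin n => (Fin.cons (phi (u i)) (fun j => phi (w j i)) : Fin (ℓ + 1) → Fin 2)) M]
  refine Finset.prod_congr rfl fun a _ => ?_
  rw [Finset.prod_const, Njac]

/-- Character sum over a submodule vanishes when the linear functional is nonzero. -/
lemma addChar_sum_submodule {F : Type*} [Field F] [Fintype F] {n : ℕ}
    (C : Submodule F (Fin n → F)) (χ : AddChar F ℂ) (hχ : ∃ x, χ x ≠ 1)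
    (v : Fin n → F) (hv : ¬ ∀ u ∈ C, ∑ i, u i * v i = 0) :
    ∑ u : C, χ (∑ i, (u : Fin n → F) i * v i) = 0 := by
  push_neg at hv
  obtain ⟨u₀, hu₀C, hu₀⟩ := hv
  obtain ⟨x, hx⟩ := hχ
  set c : F := ∑ i, u₀ i * v i with hc
  set u₁ : C := ⟨(x * c⁻¹) • u₀, C.smul_mem _ hu₀C⟩ with hu₁
  have hL : ∑ i, (u₁ : Fin n → F) i * v i = x := by
    have h1 : ∀ i, (u₁ : Fin n → F) i * v i = (x * c⁻¹) * (u₀ i * v i) := by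
      intro i; simp [hu₁, mul_assoc]
    rw [Finset.sum_congr rfl fun i _ => h1 i, ← Finset.mul_sum, ← hc, mul_assoc,
      inv_mul_cancel₀ hu₀, mul_one]
  have key : (∑ u : C, χ (∑ i, (u : Fin n → F) i * v i))
      = χ x * ∑ u : C, χ (∑ i, (u : Fin n → F) i * v i) := by
    conv_lhs => rw [← Fintype.sum_equiv (Equiv.addLeft u₁)
      (fun u : C => χ (∑ i, ((u₁ + u : C) : Fin n → F) i * v i))
      (fun u : C => χ (∑ i, (u : Fin n → F) i * v i)) (fun u => rfl)]
    rw [Finset.mul_sum]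
    refine Finset.sum_congr rfl fun u _ => ?_
    have hadd : ∑ i, ((u₁ + u : C) : Fin n → F) i * v i
        = (∑ i, (u₁ : Fin n → F) i * v i) + ∑ i, (u : Fin n → F) i * v i := by
      rw [← Finset.sum_add_distrib]
      exact Finset.sum_congr rfl fun i _ => by simp [add_mul]
    rw [hadd, χ.map_add_eq_mul, hL]
  have h0 : (χ x - 1) * ∑ u : C, χ (∑ i, (u : Fin n → F) i * v i) = 0 := by
    rw [sub_mul, one_mul, ← key, sub_self]
  exact (mul_eq_zero.mp h0).resolve_left (sub_ne_zero_of_ne hx)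

/-- MacWilliams type identity for Jacobi polynomials with multiple reference vectors. -/
theorem jacPoly_dual_macwilliams {F : Type*} [Field F] [Fintype F] {n ℓ : ℕ}
    (C Cperp : Submodule F (Fin n → F))
    (hperp : ∀ v, v ∈ Cperp ↔ ∀ u ∈ C, ∑ i, u i * v i = 0)
    (χ : AddChar F ℂ) (hχ : ∃ x, χ x ≠ 1)
    (w : Fin ℓ → Fin n → F)
    (σ : (Fin (ℓ + 1) → Fin 2) → MvPolynomial (Fin (ℓ + 1) → Fin 2) ℂ)
    (hσ : ∀ a : Fin (ℓ + 1) → F,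
      σ (fun i => phi (a i)) =
        ∑ b : F, χ (a 0 * b) •
          MvPolynomial.X (fun i : Fin (ℓ + 1) => if i = 0 then phi b else phi (a i))) :
    jacPoly Cperp w = (Fintype.card C : ℂ)⁻¹ • MvPolynomial.aeval σ (jacPoly C w) := by
  classical
  have hcard : (Fintype.card C : ℂ) ≠ 0 := Nat.cast_ne_zero.mpr Fintype.card_ne_zero
  rw [eq_inv_smul_iff₀ hcard]
  -- notation
  set q : F → Fin n → (Fin (ℓ + 1) → Fin 2) :=
    fun b i => Fin.cons (phi b) (fun j => phi (w j i)) with hq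
  set f : (Fin n → F) → MvPolynomial (Fin (ℓ + 1) → Fin 2) ℂ :=
    fun v => ∏ i, MvPolynomial.X (q (v i) i) with hf
  -- the substitution rule at each coordinate
  have hσ' : ∀ (u : Fin n → F) (i : Fin n),
      σ (q (u i) i) = ∑ b : F, χ (u i * b) • MvPolynomial.X (q b i) := by
    intro u i
    have h1 : (fun k => phi ((Fin.cons (u i) (fun j => w j i) : Fin (ℓ + 1) → F) k))
        = q (u i) i := by
      funext k; refine Fin.cases ?_ ?_ k <;> simp [hq]
    have h2 : ∀ b : F, (fun k : Fin (ℓ + 1) =>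
        if k = 0 then phi b else phi ((Fin.cons (u i) (fun j => w j i) : Fin (ℓ + 1) → F) k))
        = q b i := by
      intro b; funext k
      refine Fin.cases ?_ (fun j => ?_) k
      · simp [hq]
      · simp [hq, Fin.succ_ne_zero]
    have := hσ (Fin.cons (u i) (fun j => w j i))
    rw [h1] at this
    simpa [h2] using this
  -- character sums over C
  have hsum : ∀ v : Fin n → F,
      (∑ u : C, χ (∑ i, (u : Fin n → F) i * v i))
        = if v ∈ Cperp then (Fintype.card C : ℂ) else 0 := by
    intro v
    split_ifs with h
    · have : ∀ u : C, χ (∑ i, (u : Fin n → F) i * v i) = 1 := fun u => by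
        rw [(hperp v).mp h u u.2, χ.map_zero_eq_one]
      rw [Finset.sum_congr rfl fun u _ => this u]
      simp
    · exact addChar_sum_submodule C χ hχ v (fun hall => h ((hperp v).mpr hall))
  -- main calculation
  calc (Fintype.card C : ℂ) • jacPoly Cperp w
      = ∑ v : Cperp, (Fintype.card C : ℂ) • f (v : Fin n → F) := by
        rw [jacPoly, Finset.smul_sum]
        refine Finset.sum_congr rfl fun v _ => ?_
        rw [prod_pow_Njac]
    _ = ∑ v ∈ Finset.univ.filter (fun v : Fin n → F => v ∈ Cperp),
          (Fintype.card C : ℂ) • f v := by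
        rw [Finset.sum_subtype (p := fun v : Fin n → F => v ∈ Cperp)
          (Finset.univ.filter fun v : Fin n → F => v ∈ Cperp)
          (fun v => by simp) (fun v => (Fintype.card C : ℂ) • f v)]
    _ = ∑ v : Fin n → F, (if v ∈ Cperp then (Fintype.card C : ℂ) else 0) • f v := by
        rw [Finset.sum_filter]
        refine Finset.sum_congr rfl fun v _ => ?_
        split_ifs <;> simp
    _ = ∑ v : Fin n → F, (∑ u : C, χ (∑ i, (u : Fin n → F) i * v i)) • f v := by
        refine Finset.sum_congr rfl fun v _ => ?_
        rw [hsum v]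
    _ = ∑ v : Fin n → F, ∑ u : C, χ (∑ i, (u : Fin n → F) i * v i) • f v := by
        refine Finset.sum_congr rfl fun v _ => ?_
        rw [Finset.sum_smul]
    _ = ∑ u : C, ∑ v : Fin n → F, χ (∑ i, (u : Fin n → F) i * v i) • f v :=
        Finset.sum_comm
    _ = ∑ u : C, ∑ v : Fin n → F,
          ∏ i, (χ ((u : Fin n → F) i * v i) • MvPolynomial.X (q (v i) i)) := by
        refine Finset.sum_congr rfl fun u _ => Finset.sum_congr rfl fun v _ => ?_
        simp only [MvPolynomial.smul_eq_C_mul, Finset.prod_mul_distrib, ← map_prod,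
          ← addChar_map_sum, hf]
    _ = ∑ u : C, ∏ i, ∑ b : F, χ ((u : Fin n → F) i * b) • MvPolynomial.X (q b i) := by
        refine Finset.sum_congr rfl fun u _ => ?_
        rw [Finset.prod_univ_sum]
        rw [Fintype.piFinset_univ]
    _ = ∑ u : C, ∏ i, σ (q ((u : Fin n → F) i) i) := by
        refine Finset.sum_congr rfl fun u _ => Finset.prod_congr rfl fun i _ => ?_
        rw [hσ' (u : Fin n → F) i]
    _ = MvPolynomial.aeval σ (jacPoly C w) := by
        rw [jacPoly, map_sum]
        refine (Finset.sum_congr rfl fun u _ => ?_).symm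
        rw [map_prod]
        simp only [map_pow, MvPolynomial.aeval_X]
        rw [prod_pow_Njac]
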